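/- Let X and Y be identically distributed random variables taking values in the positive integers, coupled so that P(X = b·Y) ≥ 1 − p for some integer b ≥ 2 and p ∈ (0,1]. Then E[X] ≥ p·(b^{1/p} − 1)/(b − 1). -/

import Mathlib

open MeasureTheory ProbabilityTheory
open scoped ENNReal

/-- Auxiliary coefficients: `a b 0 = 1`, `a b (k+1) = b^(k+1) - b^k`. -/
def stmt0aux (b : ℕ) : ℕ → ℕ
  | 0 => 1
  | (k+1) => b ^ (k+1) - b ^ k

lemma stmt0aux_sum (b : ℕ) (hb : 1 ≤ b) (m : ℕ) :
    ∑ k ∈ Finset.range (m+1), stmt0aux b k = b ^ m := by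
  induction m with
  | zero => simp [stmt0aux]
  | succ m ih =>
      rw [Finset.sum_range_succ, ih]
      have : b ^ m ≤ b ^ (m+1) := Nat.pow_le_pow_right hb (by omega)
      simp only [stmt0aux]
      omega

lemma stmt0aux_ptwise (b : ℕ) (hb : 1 ≤ b) (m n : ℕ) (hn : 1 ≤ n) :
    ∑ k ∈ Finset.range (m+1), (if b ^ k ≤ n then stmt0aux b k else 0) ≤ n := by
  induction m with
  | zero => simp [stmt0aux, hn]
  | succ m ih =>
      rw [Finset.sum_range_succ]
      by_cases h : b ^ (m+1) ≤ n
      · have hall : ∀ k ∈ Finset.range (m+1+1),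
            (if b ^ k ≤ n then stmt0aux b k else 0) = stmt0aux b k := by
          intro k hk
          rw [Finset.mem_range] at hk
          have : b ^ k ≤ b ^ (m+1) := Nat.pow_le_pow_right hb (by omega)
          rw [if_pos (le_trans this h)]
        calc (∑ k ∈ Finset.range (m+1), (if b ^ k ≤ n then stmt0aux b k else 0))
              + (if b ^ (m+1) ≤ n then stmt0aux b (m+1) else 0)
            = ∑ k ∈ Finset.range (m+1+1), stmt0aux b k := by
              rw [← Finset.sum_range_succ]; exact Finset.sum_congr rfl hall
          _ = b ^ (m+1) := stmt0aux_sum b hb (m+1)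
          _ ≤ n := h
      · rw [if_neg h]; simpa using ih

lemma stmt0aux_cast (b : ℕ) (hb : 1 ≤ b) (k : ℕ) :
    (stmt0aux b (k+1) : ℝ) = (b:ℝ) ^ (k+1) - (b:ℝ) ^ k := by
  have : b ^ k ≤ b ^ (k+1) := Nat.pow_le_pow_right hb (by omega)
  simp [stmt0aux, Nat.cast_sub this]

lemma stmt0aux_sum_id (b : ℕ) (hb : 2 ≤ b) (p : ℝ) (m : ℕ) :
    ∑ k ∈ Finset.range (m+1), (stmt0aux b k : ℝ) * (1 - k * p)
      = (b:ℝ) ^ m * (1 - p * m) + p * ((b:ℝ) ^ m - 1) / ((b:ℝ) - 1) := by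
  have hbne : (b:ℝ) - 1 ≠ 0 := by
    have : (2:ℝ) ≤ (b:ℝ) := by exact_mod_cast hb
    linarith
  induction m with
  | zero => simp [stmt0aux]
  | succ m ih =>
      rw [Finset.sum_range_succ, ih, stmt0aux_cast b (by omega) m]
      push_cast
      field_simp
      ring

theorem stmt0 {Ω : Type*} [MeasurableSpace Ω] (μ : Measure Ω) [IsProbabilityMeasure μ]
    (X Y : Ω → ℕ) (hX : Measurable X) (hY : Measurable Y)
    (hXpos : ∀ ω, 1 ≤ X ω) (hYpos : ∀ ω, 1 ≤ Y ω)
    (hid : IdentDistrib X Y μ μ)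
    (b : ℕ) (hb : 2 ≤ b) (p : ℝ) (hp0 : 0 < p) (hp1 : p ≤ 1)
    (hcoup : ENNReal.ofReal (1 - p) ≤ μ {ω | X ω = b * Y ω}) :
    ENNReal.ofReal (p * ((b : ℝ) ^ ((1 : ℝ) / p) - 1) / ((b : ℝ) - 1))
      ≤ ∫⁻ ω, (X ω : ℝ≥0∞) ∂μ := by
  classical
  have hb2 : (2:ℝ) ≤ (b:ℝ) := by exact_mod_cast hb
  have hD : (0:ℝ) < (b:ℝ) - 1 := by linarith
  have hbpos : (0:ℝ) < (b:ℝ) := by linarith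
  set A : ℕ → Set Ω := fun k => {ω | b ^ k ≤ X ω} with hAdef
  have mA : ∀ k, MeasurableSet (A k) := fun k => hX measurableSet_Ici
  set C : Set Ω := {ω | X ω = b * Y ω} with hCdef
  have mC : MeasurableSet C :=
    measurableSet_eq_fun hX (measurable_from_top.comp hY)
  have hCc : μ Cᶜ ≤ ENNReal.ofReal p := by
    rw [prob_compl_eq_one_sub mC]
    calc 1 - μ C ≤ 1 - ENNReal.ofReal (1 - p) := tsub_le_tsub_left hcoup 1
      _ = ENNReal.ofReal 1 - ENNReal.ofReal (1 - p) := by rw [ENNReal.ofReal_one]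
      _ = ENNReal.ofReal (1 - (1 - p)) := (ENNReal.ofReal_sub 1 (by linarith)).symm
      _ = ENNReal.ofReal p := by ring_nf
  have hq : ∀ k : ℕ, ENNReal.ofReal (1 - k * p) ≤ μ (A k) := by
    intro k
    induction k with
    | zero =>
        have hA0 : A 0 = Set.univ := by
          ext ω; simpa [hAdef] using hXpos ω
        simp [hA0]
    | succ k ih =>
        have hsub : {ω | b ^ k ≤ Y ω} ⊆ A (k+1) ∪ Cᶜ := by
          intro ω hω
          by_cases hc : X ω = b * Y ω
          · left
            show b ^ (k+1) ≤ X ω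
            calc b ^ (k+1) = b * b ^ k := by ring
              _ ≤ b * Y ω := Nat.mul_le_mul_left b hω
              _ = X ω := hc.symm
          · right; exact hc
        have h1 : μ (A k) = μ {ω | b ^ k ≤ Y ω} :=
          hid.measure_mem_eq (measurableSet_Ici : MeasurableSet (Set.Ici (b ^ k)))
        have step : μ (A k) ≤ μ (A (k+1)) + ENNReal.ofReal p := by
          calc μ (A k) = μ {ω | b ^ k ≤ Y ω} := h1
            _ ≤ μ (A (k+1) ∪ Cᶜ) := measure_mono hsub
            _ ≤ μ (A (k+1)) + μ Cᶜ := measure_union_le _ _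
            _ ≤ μ (A (k+1)) + ENNReal.ofReal p := add_le_add_right hCc _
        have heq : ENNReal.ofReal (1 - (k+1 : ℕ) * p)
            = ENNReal.ofReal (1 - k * p) - ENNReal.ofReal p := by
          rw [← ENNReal.ofReal_sub _ hp0.le]
          congr 1
          push_cast
          ring
        rw [heq]
        exact tsub_le_iff_right.mpr (le_trans ih step)
  set F := Nat.floor ((1:ℝ)/p) with hFdef
  have hinv0 : (0:ℝ) ≤ 1/p := by positivity
  have hFle : (F:ℝ) ≤ 1/p := Nat.floor_le hinv0
  have hFlt : 1/p < (F:ℝ) + 1 := Nat.lt_floor_add_one _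
  -- pointwise bound
  have hpt : ∀ ω, (∑ k ∈ Finset.range (F+1),
      Set.indicator (A k) (fun _ => ((stmt0aux b k : ℕ) : ℝ≥0∞)) ω) ≤ (X ω : ℝ≥0∞) := by
    intro ω
    have h := stmt0aux_ptwise b (by omega) F (X ω) (hXpos ω)
    calc (∑ k ∈ Finset.range (F+1),
          Set.indicator (A k) (fun _ => ((stmt0aux b k : ℕ) : ℝ≥0∞)) ω)
        = ((∑ k ∈ Finset.range (F+1),
            if b ^ k ≤ X ω then stmt0aux b k else 0 : ℕ) : ℝ≥0∞) := by
          push_cast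
          refine Finset.sum_congr rfl fun k _ => ?_
          by_cases hk : b ^ k ≤ X ω
          · simp [Set.indicator, hAdef, hk]
          · simp [Set.indicator, hAdef, hk]
      _ ≤ (X ω : ℝ≥0∞) := by exact_mod_cast h
  have hmeas : ∀ k ∈ Finset.range (F+1),
      Measurable (Set.indicator (A k) (fun _ : Ω => ((stmt0aux b k : ℕ) : ℝ≥0∞))) :=
    fun k _ => measurable_const.indicator (mA k)
  have hmono : ∑ k ∈ Finset.range (F+1), (stmt0aux b k : ℝ≥0∞) * μ (A k)
      ≤ ∫⁻ ω, (X ω : ℝ≥0∞) ∂μ := by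
    have h2 := lintegral_mono (μ := μ) hpt
    rw [lintegral_finset_sum _ hmeas] at h2
    refine le_trans (le_of_eq ?_) h2
    refine Finset.sum_congr rfl fun k _ => ?_
    rw [lintegral_indicator (mA k), setLIntegral_const]
  -- nonnegativity of real terms
  have hnonneg : ∀ k ∈ Finset.range (F+1), (0:ℝ) ≤ (stmt0aux b k : ℝ) * (1 - k * p) := by
    intro k hk
    rw [Finset.mem_range] at hk
    have hkF : (k:ℝ) ≤ (F:ℝ) := by exact_mod_cast Nat.lt_succ_iff.mp hk
    have : (k:ℝ) * p ≤ 1 := by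
      have h3 : (k:ℝ) ≤ 1/p := le_trans hkF hFle
      calc (k:ℝ) * p ≤ (1/p) * p := by nlinarith
        _ = 1 := by field_simp
    have := Nat.cast_nonneg (α := ℝ) (stmt0aux b k)
    nlinarith
  -- real inequality
  have hreal : p * ((b:ℝ) ^ ((1:ℝ)/p) - 1) / ((b:ℝ) - 1)
      ≤ ∑ k ∈ Finset.range (F+1), (stmt0aux b k : ℝ) * (1 - k * p) := by
    rw [stmt0aux_sum_id b hb p F]
    set θ : ℝ := 1/p - F with hθ
    have hθ0 : 0 ≤ θ := by rw [hθ]; linarith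
    have hθ1 : θ ≤ 1 := by rw [hθ]; linarith
    have key : (b:ℝ) ^ θ ≤ 1 + θ * ((b:ℝ) - 1) := by
      have h4 := Real.geom_mean_le_arith_mean2_weighted (sub_nonneg.mpr hθ1) hθ0
        zero_le_one hbpos.le (by ring)
      rw [Real.one_rpow, one_mul] at h4
      linarith
    have hsplit : (b:ℝ) ^ ((1:ℝ)/p) = (b:ℝ) ^ (F:ℕ) * (b:ℝ) ^ θ := by
      rw [← Real.rpow_natCast (b:ℝ) F, ← Real.rpow_add hbpos]
      congr 1
      rw [hθ]; ring
    rw [hsplit]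
    have hpθ : p * θ = 1 - p * F := by rw [hθ]; field_simp
    have hbF : (0:ℝ) < (b:ℝ) ^ (F:ℕ) := by positivity
    have hRHS : (b:ℝ) ^ (F:ℕ) * (1 - p * F) + p * ((b:ℝ) ^ (F:ℕ) - 1) / ((b:ℝ) - 1)
        = ((b:ℝ) ^ (F:ℕ) * (1 - p * F) * ((b:ℝ) - 1) + p * ((b:ℝ) ^ (F:ℕ) - 1)) / ((b:ℝ) - 1) := by
      field_simp
    rw [hRHS, div_le_div_iff₀ hD hD]
    have hprod : p * (b:ℝ) ^ (F:ℕ) * ((b:ℝ) ^ θ) ≤ p * (b:ℝ) ^ (F:ℕ) * (1 + θ * ((b:ℝ) - 1)) :=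
      mul_le_mul_of_nonneg_left key (by positivity)
    have h5 : p * (b:ℝ) ^ (F:ℕ) * ((b:ℝ) ^ θ) * ((b:ℝ) - 1)
        ≤ p * (b:ℝ) ^ (F:ℕ) * (1 + θ * ((b:ℝ) - 1)) * ((b:ℝ) - 1) :=
      mul_le_mul_of_nonneg_right hprod hD.le
    have hsubst : p * θ * ((b:ℝ) ^ (F:ℕ) * ((b:ℝ) - 1)^2)
        = (1 - p * F) * ((b:ℝ) ^ (F:ℕ) * ((b:ℝ) - 1)^2) := by rw [hpθ]
    nlinarith [h5, hsubst]
  calc ENNReal.ofReal (p * ((b:ℝ) ^ ((1:ℝ)/p) - 1) / ((b:ℝ) - 1))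
      ≤ ENNReal.ofReal (∑ k ∈ Finset.range (F+1), (stmt0aux b k : ℝ) * (1 - k * p)) :=
        ENNReal.ofReal_le_ofReal hreal
    _ = ∑ k ∈ Finset.range (F+1), ENNReal.ofReal ((stmt0aux b k : ℝ) * (1 - k * p)) :=
        ENNReal.ofReal_sum_of_nonneg hnonneg
    _ = ∑ k ∈ Finset.range (F+1), (stmt0aux b k : ℝ≥0∞) * ENNReal.ofReal (1 - k * p) := by
        refine Finset.sum_congr rfl fun k _ => ?_
        rw [ENNReal.ofReal_mul (Nat.cast_nonneg _), ENNReal.ofReal_natCast]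
    _ ≤ ∑ k ∈ Finset.range (F+1), (stmt0aux b k : ℝ≥0∞) * μ (A k) :=
        Finset.sum_le_sum fun k _ => mul_le_mul_right (hq k) _
    _ ≤ ∫⁻ ω, (X ω : ℝ≥0∞) ∂μ := hmono
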